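/- Let s be a nonnegative integer. Every P_4-sparse finite simple graph that is a minimal (s,1)-polar obstruction is a cograph (that is, it contains no induced path on four vertices). -/

import Mathlib

open SimpleGraph

universe u v

/-! ### Basic predicates -/

/-- `B` induces a disjoint union of complete graphs in `G` (i.e. `G[B]` is a cluster). -/
def IsClusterSet {V : Type*} (G : SimpleGraph V) (B : Set V) : Prop :=
  ∀ ⦃u w x : V⦄, u ∈ B → w ∈ B → x ∈ B → G.Adj u w → G.Adj w x → u ≠ x → G.Adj u x

/-- `A` induces a complete multipartite graph in `G`
(the complement of `G[A]` is a disjoint union of cliques). -/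
def IsCompleteMultipartiteSet {V : Type*} (G : SimpleGraph V) (A : Set V) : Prop :=
  ∀ ⦃u w x : V⦄, u ∈ A → w ∈ A → x ∈ A → u ≠ w → w ≠ x → u ≠ x →
    ¬ G.Adj u w → ¬ G.Adj w x → ¬ G.Adj u x

/-- `A` is an independent set of `G`. -/
def IsIndepSet {V : Type*} (G : SimpleGraph V) (A : Set V) : Prop :=
  ∀ ⦃u w : V⦄, u ∈ A → w ∈ A → ¬ G.Adj u w

/-- `G[B]` is a disjoint union of at most `k` complete graphs. -/
def IsClusterSetLE {V : Type*} (G : SimpleGraph V) (k : ℕ) (B : Set V) : Prop :=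
  ∃ g : B → Fin k, ∀ u w : B, u ≠ w → (G.Adj u w ↔ g u = g w)

/-- `G[A]` is a complete multipartite graph with at most `s` parts. -/
def IsCompleteMultipartiteSetLE {V : Type*} (G : SimpleGraph V) (s : ℕ) (A : Set V) : Prop :=
  ∃ f : A → Fin s, ∀ u w : A, G.Adj u w ↔ f u ≠ f w

/-! ### Polarity properties -/

/-- `G` is unipolar: a partition `(A, Aᶜ)` with `A` a clique and `G[Aᶜ]` a cluster. -/
def Unipolar {V : Type*} (G : SimpleGraph V) : Prop :=
  ∃ A : Set V, G.IsClique A ∧ IsClusterSet G Aᶜ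

/-- `G` is monopolar ((1,∞)-polar). -/
def Monopolar {V : Type*} (G : SimpleGraph V) : Prop :=
  ∃ A : Set V, _root_.IsIndepSet G A ∧ IsClusterSet G Aᶜ

/-- `G` is polar ((∞,∞)-polar). -/
def Polar {V : Type*} (G : SimpleGraph V) : Prop :=
  ∃ A : Set V, IsCompleteMultipartiteSet G A ∧ IsClusterSet G Aᶜ

/-- `G` is (s,1)-polar. -/
def SOnePolar {V : Type*} (s : ℕ) (G : SimpleGraph V) : Prop :=
  ∃ A : Set V, IsCompleteMultipartiteSetLE G s A ∧ G.IsClique Aᶜ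

/-- `G` is (∞,1)-polar. -/
def InfOnePolar {V : Type*} (G : SimpleGraph V) : Prop :=
  ∃ A : Set V, IsCompleteMultipartiteSet G A ∧ G.IsClique Aᶜ

/-- `G` is (1,k)-polar. -/
def OneKPolar {V : Type*} (k : ℕ) (G : SimpleGraph V) : Prop :=
  ∃ A : Set V, _root_.IsIndepSet G A ∧ IsClusterSetLE G k Aᶜ

/-! ### Minimal obstructions -/

def MinUnipolarObstruction {V : Type*} (G : SimpleGraph V) : Prop :=
  ¬ Unipolar G ∧ ∀ s : Set V, s ≠ Set.univ → Unipolar (G.induce s)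

def MinMonopolarObstruction {V : Type*} (G : SimpleGraph V) : Prop :=
  ¬ Monopolar G ∧ ∀ s : Set V, s ≠ Set.univ → Monopolar (G.induce s)

def MinPolarObstruction {V : Type*} (G : SimpleGraph V) : Prop :=
  ¬ Polar G ∧ ∀ s : Set V, s ≠ Set.univ → Polar (G.induce s)

def MinSOnePolarObstruction {V : Type*} (s : ℕ) (G : SimpleGraph V) : Prop :=
  ¬ SOnePolar s G ∧ ∀ t : Set V, t ≠ Set.univ → SOnePolar s (G.induce t)

def MinInfOnePolarObstruction {V : Type*} (G : SimpleGraph V) : Prop :=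
  ¬ InfOnePolar G ∧ ∀ t : Set V, t ≠ Set.univ → InfOnePolar (G.induce t)

def MinOneKPolarObstruction {V : Type*} (k : ℕ) (G : SimpleGraph V) : Prop :=
  ¬ OneKPolar k G ∧ ∀ t : Set V, t ≠ Set.univ → OneKPolar k (G.induce t)

/-! ### Graph constructions -/

/-- The join of two graphs: all edges added between the summands. -/
def joinG {α β : Type*} (G : SimpleGraph α) (H : SimpleGraph β) : SimpleGraph (α ⊕ β) where
  Adj x y := (G ⊕g H).Adj x y ∨ (x.isLeft ∧ y.isRight) ∨ (x.isRight ∧ y.isLeft)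
  symm := ⟨fun x y h => by
    rcases h with h | ⟨h1, h2⟩ | ⟨h1, h2⟩
    · exact Or.inl ((G ⊕g H).adj_symm h)
    · exact Or.inr (Or.inr ⟨h2, h1⟩)
    · exact Or.inr (Or.inl ⟨h2, h1⟩)⟩
  loopless := ⟨fun x h => by
    rcases h with h | ⟨h1, h2⟩ | ⟨h1, h2⟩
    · exact (G ⊕g H).irrefl h
    · cases x <;> simp_all
    · cases x <;> simp_all⟩

/-- `K_n`, the complete graph on `n` vertices. -/
def KG (n : ℕ) : SimpleGraph (Fin n) := ⊤

/-- `n K_1`, the edgeless graph on `n` vertices. -/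
def EG (n : ℕ) : SimpleGraph (Fin n) := ⊥

/-- The banner graph `P`: a four-cycle `0 1 2 3` with a pendant vertex `4` adjacent to `0`. -/
def banner : SimpleGraph (Fin 5) :=
  SimpleGraph.fromEdgeSet {s(0, 1), s(1, 2), s(2, 3), s(3, 0), s(0, 4)}

/-- The chair (fork) graph `F`: a path `0 1 2 3` with an extra vertex `4` adjacent to `1`. -/
def chair : SimpleGraph (Fin 5) :=
  SimpleGraph.fromEdgeSet {s(0, 1), s(1, 2), s(2, 3), s(1, 4)}

/-- `2P_3`. -/
def twoP3 : SimpleGraph (Fin 3 ⊕ Fin 3) := pathGraph 3 ⊕g pathGraph 3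

/-- `K_{2,3}`. -/
def K23 : SimpleGraph (Fin 2 ⊕ Fin 3) := completeBipartiteGraph (Fin 2) (Fin 3)

/-- The seven graphs `E1, E2, E3, E7, E10, E11, E12`. -/
def E1 : SimpleGraph (Fin 1 ⊕ (Fin 2 ⊕ Fin 2)) := KG 1 ⊕g (KG 2 ⊕g KG 2)
def E2 : SimpleGraph (Fin 3 ⊕ Fin 3) := pathGraph 3 ⊕g pathGraph 3
def E3 : SimpleGraph (Fin 4 ⊕ Fin 2) := cycleGraph 4 ⊕g EG 2
def E7 : SimpleGraph (Fin 1 ⊕ (Fin 3 ⊕ Fin 2)) := KG 1 ⊕g (pathGraph 3 ⊕g KG 2)ᶜ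
def E10 : SimpleGraph (Fin 1 ⊕ Fin 5) := KG 1 ⊕g cycleGraph 5
def E11 : SimpleGraph (Fin 1 ⊕ Fin 5) := KG 1 ⊕g banner
def E12 : SimpleGraph (Fin 1 ⊕ Fin 5) := KG 1 ⊕g (pathGraph 5)ᶜ

/-! ### P4 structure -/

/-- `W` induces a path on four vertices in `G`. -/
def InducesP4 {V : Type*} (G : SimpleGraph V) (W : Set V) : Prop :=
  Nonempty (G.induce W ≃g pathGraph 4)

/-- A graph is a cograph if it has no induced `P_4`. -/
def Cograph {V : Type*} (G : SimpleGraph V) : Prop :=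
  ∀ W : Set V, ¬ InducesP4 G W

/-- `G` is `P_4`-sparse: any five vertices induce at most one `P_4`. -/
def P4Sparse {V : Type*} (G : SimpleGraph V) : Prop :=
  ∀ s : Set V, s.ncard = 5 → ∀ W₁ W₂ : Set V, W₁ ⊆ s → W₂ ⊆ s →
    InducesP4 G W₁ → InducesP4 G W₂ → W₁ = W₂

/-- `G` is `P_4`-extendible. -/
def P4Extendible {V : Type*} (G : SimpleGraph V) : Prop :=
  ∀ W : Set V, InducesP4 G W →
    ∀ v₁ v₂ : V, v₁ ∉ W → v₂ ∉ W →
      (∃ W₁ : Set V, InducesP4 G W₁ ∧ v₁ ∈ W₁ ∧ (W₁ ∩ W).Nonempty) →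
      (∃ W₂ : Set V, InducesP4 G W₂ ∧ v₂ ∈ W₂ ∧ (W₂ ∩ W).Nonempty) → v₁ = v₂

/-! ### Spiders -/

/-- `(S, K, R)` is a spider partition of `G`. -/
def IsSpiderPartition {V : Type*} (G : SimpleGraph V) (S K R : Set V) : Prop :=
  S ∪ K ∪ R = Set.univ ∧ Disjoint S K ∧ Disjoint S R ∧ Disjoint K R ∧
  S.ncard = K.ncard ∧ 2 ≤ K.ncard ∧
  G.IsClique K ∧ _root_.IsIndepSet G S ∧
  (∃ f : S → K, Function.Bijective f ∧
    ((∀ s : S, ∀ k : K, G.Adj s k ↔ (f s : V) = k) ∨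
     (∀ s : S, ∀ k : K, G.Adj s k ↔ (f s : V) ≠ k))) ∧
  (∀ r ∈ R, ∀ k ∈ K, G.Adj r k) ∧
  (∀ r ∈ R, ∀ s ∈ S, ¬ G.Adj r s)

/-- `G` is a `B`-spider with partition `(S, K, R)`, where `B` is a fixed base graph with
midpoint set `M` and endpoint set `E`: `G` is obtained from a copy of `B` (whose midpoints
form `K` and whose endpoints form `S`) by adding the set `R` of vertices, each adjacent to
all midpoints and to no endpoint. -/
def IsBaseSpider {n : ℕ} {V : Type*} (B : SimpleGraph (Fin n)) (M E : Set (Fin n))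
    (G : SimpleGraph V) (S K R : Set V) : Prop :=
  ∃ f : Fin n → V, Function.Injective f ∧
    (∀ i j : Fin n, G.Adj (f i) (f j) ↔ B.Adj i j) ∧
    K = f '' M ∧ S = f '' E ∧ R = (Set.range f)ᶜ ∧
    (∀ r ∈ R, ∀ x ∈ K, G.Adj r x) ∧
    (∀ r ∈ R, ∀ x ∈ S, ¬ G.Adj r x)

/-! ### Auxiliary lemmas for the proof of Statement 16 -/

/-- Build `SOnePolar` from set-level data with a sentinel colouring. -/
lemma sone_mk {V : Type*} {s : ℕ} {G : SimpleGraph V} (A : Set V) (g : V → ℕ)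
    (hlt : ∀ v ∈ A, g v < s)
    (hadj : ∀ u ∈ A, ∀ w ∈ A, (G.Adj u w ↔ g u ≠ g w))
    (hcl : ∀ u ∈ Aᶜ, ∀ w ∈ Aᶜ, u ≠ w → G.Adj u w) : SOnePolar s G := by
  refine ⟨A, ⟨fun x => ⟨g x, hlt x x.2⟩, ?_⟩, ?_⟩
  · intro u w
    rw [hadj u u.2 w w.2]
    simp [Fin.ext_iff]
  · intro u hu w hw hne
    exact hcl u hu w hw hne

/-- Extract set-level data from `SOnePolar` of an induced subgraph. -/
lemma sone_extract {V : Type*} {s : ℕ} {G : SimpleGraph V} {t : Set V}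
    (h : SOnePolar s (G.induce t)) :
    ∃ (A : Set V) (g : V → ℕ), A ⊆ t ∧ (∀ v ∈ A, g v < s) ∧
      (∀ u ∈ A, ∀ w ∈ A, (G.Adj u w ↔ g u ≠ g w)) ∧
      (∀ u, u ∈ t → u ∉ A → ∀ w, w ∈ t → w ∉ A → u ≠ w → G.Adj u w) := by
  classical
  obtain ⟨A₀, ⟨f₀, hf₀⟩, hcl₀⟩ := h
  refine ⟨{v | ∃ hv : v ∈ t, (⟨v, hv⟩ : t) ∈ A₀},
    fun v => if h : ∃ hv : v ∈ t, (⟨v, hv⟩ : t) ∈ A₀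
      then (f₀ ⟨⟨v, h.choose⟩, h.choose_spec⟩ : Fin s).val else s, ?_, ?_, ?_, ?_⟩
  · intro v hv; exact hv.choose
  · intro v hv
    dsimp only
    rw [dif_pos (show ∃ hv : v ∈ t, (⟨v, hv⟩ : t) ∈ A₀ from hv)]
    exact (f₀ _).isLt
  · intro u hu w hw
    dsimp only
    rw [dif_pos (show ∃ hv : u ∈ t, (⟨u, hv⟩ : t) ∈ A₀ from hu),
        dif_pos (show ∃ hv : w ∈ t, (⟨w, hv⟩ : t) ∈ A₀ from hw)]
    have h2 := hf₀ ⟨⟨u, hu.choose⟩, hu.choose_spec⟩ ⟨⟨w, hw.choose⟩, hw.choose_spec⟩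
    simp only [comap_adj, Function.Embedding.coe_subtype] at h2
    rw [h2]
    constructor
    · intro hne hval
      exact hne (Fin.ext hval)
    · intro hval hne
      exact hval (congrArg Fin.val hne)
  · intro u hut huA w hwt hwA hne
    have h1 : (⟨u, hut⟩ : t) ∈ A₀ᶜ := fun hc => huA ⟨hut, hc⟩
    have h2 : (⟨w, hwt⟩ : t) ∈ A₀ᶜ := fun hc => hwA ⟨hwt, hc⟩
    have h3 : (⟨u, hut⟩ : t) ≠ ⟨w, hwt⟩ := fun hc => hne (congrArg Subtype.val hc)
    exact hcl₀ h1 h2 h3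

/-- An explicit induced path on four vertices gives `InducesP4`. -/
lemma inducesP4_of {V : Type*} {G : SimpleGraph V} {x₁ x₂ x₃ x₄ : V}
    (h12 : x₁ ≠ x₂) (h13 : x₁ ≠ x₃) (h14 : x₁ ≠ x₄) (h23 : x₂ ≠ x₃) (h24 : x₂ ≠ x₄)
    (h34 : x₃ ≠ x₄)
    (a12 : G.Adj x₁ x₂) (a23 : G.Adj x₂ x₃) (a34 : G.Adj x₃ x₄)
    (n13 : ¬ G.Adj x₁ x₃) (n14 : ¬ G.Adj x₁ x₄) (n24 : ¬ G.Adj x₂ x₄) :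
    InducesP4 G {x₁, x₂, x₃, x₄} := by
  classical
  set S : Set V := {x₁, x₂, x₃, x₄} with hS
  have m1 : x₁ ∈ S := by simp [hS]
  have m2 : x₂ ∈ S := by simp [hS]
  have m3 : x₃ ∈ S := by simp [hS]
  have m4 : x₄ ∈ S := by simp [hS]
  let l : Fin 4 → S := ![⟨x₁, m1⟩, ⟨x₂, m2⟩, ⟨x₃, m3⟩, ⟨x₄, m4⟩]
  have hinj : Function.Injective l := by
    intro i j hij
    fin_cases i <;> fin_cases j <;> simp_all [l, Subtype.ext_iff]
  have hsurj : Function.Surjective l := by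
    rintro ⟨v, hv⟩
    simp only [hS, Set.mem_insert_iff, Set.mem_singleton_iff] at hv
    rcases hv with rfl | rfl | rfl | rfl
    exacts [⟨0, rfl⟩, ⟨1, rfl⟩, ⟨2, rfl⟩, ⟨3, rfl⟩]
  have a21 := a12.symm
  have a32 := a23.symm
  have a43 := a34.symm
  have n31 : ¬ G.Adj x₃ x₁ := fun h => n13 h.symm
  have n41 : ¬ G.Adj x₄ x₁ := fun h => n14 h.symm
  have n42 : ¬ G.Adj x₄ x₂ := fun h => n24 h.symm
  have key : ∀ i j, (G.induce S).Adj (l i) (l j) ↔ (pathGraph 4).Adj i j := by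
    intro i j
    fin_cases i <;> fin_cases j <;>
      simp [l, pathGraph_adj, a12, a23, a34, a21, a32, a43, n13, n14, n24, n31, n41, n42] <;>
      decide
  exact ⟨((⟨Equiv.ofBijective l ⟨hinj, hsurj⟩, fun {i j} => key i j⟩ :
    pathGraph 4 ≃g G.induce S)).symm⟩

lemma ncard5 {V : Type*} {a b c d v : V}
    (h1 : a ≠ b) (h2 : a ≠ c) (h3 : a ≠ d) (h4 : a ≠ v) (h5 : b ≠ c) (h6 : b ≠ d)
    (h7 : b ≠ v) (h8 : c ≠ d) (h9 : c ≠ v) (h10 : d ≠ v) :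
    ({a, b, c, d, v} : Set V).ncard = 5 := by
  rw [Set.ncard_insert_of_notMem (by simp [h1, h2, h3, h4]) (Set.toFinite _),
      Set.ncard_insert_of_notMem (by simp [h5, h6, h7]) (Set.toFinite _),
      Set.ncard_insert_of_notMem (by simp [h8, h9]) (Set.toFinite _),
      Set.ncard_insert_of_notMem (by simp [h10]) (Set.toFinite _),
      Set.ncard_singleton]

/-- Every `P_4`-sparse minimal `(s,1)`-polar obstruction is a cograph. -/
theorem stmt_16 {V : Type*} [Fintype V] (s : ℕ) (G : SimpleGraph V)
    (hsp : P4Sparse G) (hobs : MinSOnePolarObstruction s G) : Cograph G := by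
  classical
  intro W hW
  obtain ⟨e⟩ := hW
  have key : ∀ i j : Fin 4,
      G.Adj ((e.symm i : W) : V) ((e.symm j : W) : V) ↔ (pathGraph 4).Adj i j := by
    intro i j
    rw [← e.symm.map_adj_iff]
    simp
  have hne : ∀ i j : Fin 4, i ≠ j → ((e.symm i : W) : V) ≠ ((e.symm j : W) : V) := by
    intro i j hij hco
    exact hij (e.symm.toEquiv.injective (Subtype.ext hco))
  obtain ⟨a, b, c, d, nab, nac, nad, nbc, nbd, ncd, hab, hbc, hcd, hac, had, hbd⟩ :
      ∃ a b c d : V, a ≠ b ∧ a ≠ c ∧ a ≠ d ∧ b ≠ c ∧ b ≠ d ∧ c ≠ d ∧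
        G.Adj a b ∧ G.Adj b c ∧ G.Adj c d ∧ ¬G.Adj a c ∧ ¬G.Adj a d ∧ ¬G.Adj b d := by
    refine ⟨_, _, _, _, hne 0 1 (by decide), hne 0 2 (by decide), hne 0 3 (by decide),
      hne 1 2 (by decide), hne 1 3 (by decide), hne 2 3 (by decide),
      (key 0 1).2 (by rw [pathGraph_adj]; decide),
      (key 1 2).2 (by rw [pathGraph_adj]; decide),
      (key 2 3).2 (by rw [pathGraph_adj]; decide),
      fun h => ?_, fun h => ?_, fun h => ?_⟩
    · rw [key 0 2, pathGraph_adj] at h; revert h; decide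
    · rw [key 0 3, pathGraph_adj] at h; revert h; decide
    · rw [key 1 3, pathGraph_adj] at h; revert h; decide
  clear key hne e
  have hP4 : InducesP4 G {a, b, c, d} :=
    inducesP4_of nab nac nad nbc nbd ncd hab hbc hcd hac had hbd
  -- classification of exterior vertices
  have htri : ∀ v : V, v ≠ a → v ≠ b → v ≠ c → v ≠ d →
      (¬G.Adj v a ∧ ¬G.Adj v b ∧ ¬G.Adj v c ∧ ¬G.Adj v d) ∨
      (¬G.Adj v a ∧ G.Adj v b ∧ G.Adj v c ∧ ¬G.Adj v d) ∨
      (G.Adj v a ∧ G.Adj v b ∧ G.Adj v c ∧ G.Adj v d) := by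
    intro v hva hvb hvc hvd
    have kill : ∀ W₂ : Set V, W₂ ⊆ {a, b, c, d, v} → v ∈ W₂ → InducesP4 G W₂ → False := by
      intro W₂ hsub hvW hi
      have h5 : ({a, b, c, d, v} : Set V).ncard = 5 :=
        ncard5 nab nac nad (Ne.symm hva) nbc nbd (Ne.symm hvb) ncd (Ne.symm hvc) (Ne.symm hvd)
      have heq := hsp {a, b, c, d, v} h5 {a, b, c, d} W₂
        (by intro x hx; simp only [Set.mem_insert_iff, Set.mem_singleton_iff] at hx ⊢; tauto)
        hsub hP4 hi
      rw [← heq] at hvW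
      simp only [Set.mem_insert_iff, Set.mem_singleton_iff] at hvW
      rcases hvW with h | h | h | h
      exacts [hva h, hvb h, hvc h, hvd h]
    have sub1 : ({v, b, c, d} : Set V) ⊆ {a, b, c, d, v} := by
      intro x hx; simp only [Set.mem_insert_iff, Set.mem_singleton_iff] at hx ⊢; tauto
    have sub2 : ({a, b, c, v} : Set V) ⊆ {a, b, c, d, v} := by
      intro x hx; simp only [Set.mem_insert_iff, Set.mem_singleton_iff] at hx ⊢; tauto
    have sub3 : ({v, a, b, c} : Set V) ⊆ {a, b, c, d, v} := by
      intro x hx; simp only [Set.mem_insert_iff, Set.mem_singleton_iff] at hx ⊢; tauto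
    have sub4 : ({b, c, d, v} : Set V) ⊆ {a, b, c, d, v} := by
      intro x hx; simp only [Set.mem_insert_iff, Set.mem_singleton_iff] at hx ⊢; tauto
    have sub5 : ({a, v, c, d} : Set V) ⊆ {a, b, c, d, v} := by
      intro x hx; simp only [Set.mem_insert_iff, Set.mem_singleton_iff] at hx ⊢; tauto
    have sub6 : ({a, b, v, d} : Set V) ⊆ {a, b, c, d, v} := by
      intro x hx; simp only [Set.mem_insert_iff, Set.mem_singleton_iff] at hx ⊢; tauto
    have sub7 : ({a, v, d, c} : Set V) ⊆ {a, b, c, d, v} := by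
      intro x hx; simp only [Set.mem_insert_iff, Set.mem_singleton_iff] at hx ⊢; tauto
    have sub8 : ({b, a, v, d} : Set V) ⊆ {a, b, c, d, v} := by
      intro x hx; simp only [Set.mem_insert_iff, Set.mem_singleton_iff] at hx ⊢; tauto
    by_cases pa : G.Adj v a <;> by_cases pb : G.Adj v b <;>
      by_cases pc : G.Adj v c <;> by_cases pd : G.Adj v d
    -- T T T T
    · exact Or.inr (Or.inr ⟨pa, pb, pc, pd⟩)
    -- T T T F : P4 a-v-c-d
    · exact (kill {a, v, c, d} sub5 (by simp)
        (inducesP4_of (Ne.symm hva) nac nad hvc hvd ncd pa.symm pc hcd hac had pd)).elim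
    -- T T F T : P4 a-v-d-c
    · exact (kill {a, v, d, c} sub7 (by simp)
        (inducesP4_of (Ne.symm hva) nad nac hvd hvc (Ne.symm ncd) pa.symm pd hcd.symm had hac pc)).elim
    -- T T F F : P4 v-b-c-d
    · exact (kill {v, b, c, d} sub1 (by simp)
        (inducesP4_of hvb hvc hvd nbc nbd ncd pb hbc hcd pc pd hbd)).elim
    -- T F T T : P4 b-a-v-d
    · exact (kill {b, a, v, d} sub8 (by simp)
        (inducesP4_of (Ne.symm nab) (Ne.symm hvb) nbd (Ne.symm hva) nad hvd
          hab.symm pa.symm pd (fun h => pb h.symm) hbd had)).elim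
    -- T F T F : P4 a-v-c-d
    · exact (kill {a, v, c, d} sub5 (by simp)
        (inducesP4_of (Ne.symm hva) nac nad hvc hvd ncd pa.symm pc hcd hac had pd)).elim
    -- T F F T : P4 b-a-v-d
    · exact (kill {b, a, v, d} sub8 (by simp)
        (inducesP4_of (Ne.symm nab) (Ne.symm hvb) nbd (Ne.symm hva) nad hvd
          hab.symm pa.symm pd (fun h => pb h.symm) hbd had)).elim
    -- T F F F : P4 v-a-b-c
    · exact (kill {v, a, b, c} sub3 (by simp)
        (inducesP4_of hva hvb hvc nab nac nbc pa hab hbc pb pc hac)).elim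
    -- F T T T : P4 a-b-v-d
    · exact (kill {a, b, v, d} sub6 (by simp)
        (inducesP4_of nab (Ne.symm hva) nad (Ne.symm hvb) nbd hvd
          hab pb.symm pd (fun h => pa h.symm) had hbd)).elim
    -- F T T F : middle class
    · exact Or.inr (Or.inl ⟨pa, pb, pc, pd⟩)
    -- F T F T : P4 a-b-v-d
    · exact (kill {a, b, v, d} sub6 (by simp)
        (inducesP4_of nab (Ne.symm hva) nad (Ne.symm hvb) nbd hvd
          hab pb.symm pd (fun h => pa h.symm) had hbd)).elim
    -- F T F F : P4 v-b-c-d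
    · exact (kill {v, b, c, d} sub1 (by simp)
        (inducesP4_of hvb hvc hvd nbc nbd ncd pb hbc hcd pc pd hbd)).elim
    -- F F T T : P4 a-b-c-v
    · exact (kill {a, b, c, v} sub2 (by simp)
        (inducesP4_of nab nac (Ne.symm hva) nbc (Ne.symm hvb) (Ne.symm hvc)
          hab hbc pc.symm hac (fun h => pa h.symm) (fun h => pb h.symm))).elim
    -- F F T F : P4 a-b-c-v
    · exact (kill {a, b, c, v} sub2 (by simp)
        (inducesP4_of nab nac (Ne.symm hva) nbc (Ne.symm hvb) (Ne.symm hvc)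
          hab hbc pc.symm hac (fun h => pa h.symm) (fun h => pb h.symm))).elim
    -- F F F T : P4 b-c-d-v
    · exact (kill {b, c, d, v} sub4 (by simp)
        (inducesP4_of nbc nbd (Ne.symm hvb) ncd (Ne.symm hvc) (Ne.symm hvd)
          hbc hcd pd.symm hbd (fun h => pb h.symm) (fun h => pc h.symm))).elim
    -- F F F F
    · exact Or.inl ⟨pa, pb, pc, pd⟩
  -- take an (s,1)-partition of G - b
  have htI : ({b}ᶜ : Set V) ≠ Set.univ := by
    intro h
    have hbmem : b ∈ ({b}ᶜ : Set V) := h.symm ▸ Set.mem_univ b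
    simp at hbmem
  obtain ⟨A, g, hAt, hlt, hadj, hcl⟩ := sone_extract (hobs.2 {b}ᶜ htI)
  have hmem : ∀ x : V, x ≠ b → x ∈ ({b}ᶜ : Set V) := fun x hx => by simpa using hx
  have hbA : b ∉ A := fun h => by simpa using hAt h
  refine absurd ?_ hobs.1
  have cliqueExt : (∀ z, z ∉ A → z ≠ b → G.Adj b z) →
      ∀ u ∈ Aᶜ, ∀ w ∈ Aᶜ, u ≠ w → G.Adj u w := by
    intro main u hu w hw huw
    by_cases hub : u = b
    · subst hub; exact main w hw (Ne.symm huw)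
    · by_cases hwb : w = b
      · subst hwb; exact (main u hu hub).symm
      · exact hcl u (hmem u hub) hu w (hmem w hwb) hw huw
  by_cases haA : a ∈ A
  · have hgEq : ∀ w ∈ A, ¬G.Adj a w → g w = g a := by
      intro w hwA hnadj
      by_contra hne
      exact hnadj ((hadj a haA w hwA).2 (fun h => hne h.symm))
    by_cases hcA : c ∈ A
    · -- case: a, c ∈ A; then d ∉ A and we swap c for d
      have hgca : g c = g a := hgEq c hcA hac
      have hdA : d ∉ A := by
        intro hdA
        have h1 : g d = g a := hgEq d hdA had
        exact (hadj c hcA d hdA).1 hcd (hgca.trans h1.symm)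
      have hside : ∀ w, w ∈ A → w ≠ c → (G.Adj d w ↔ g a ≠ g w) := by
        intro w hwA hwc
        have hwb : w ≠ b := fun h => hbA (h ▸ hwA)
        have hwd : w ≠ d := fun h => hdA (h ▸ hwA)
        by_cases hwa : w = a
        · subst hwa; exact iff_of_false (fun h => had h.symm) (by simp)
        · rcases htri w hwa hwb hwc hwd with ⟨h1, _, _, h4⟩ | ⟨h1, _, h3, h4⟩ | ⟨h1, _, _, h4⟩
          · exact iff_of_false (fun h => h4 h.symm)
              (fun h => h (hgEq w hwA (fun hh => h1 hh.symm)).symm)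
          · exfalso
            have hgw : g w = g a := hgEq w hwA (fun hh => h1 hh.symm)
            exact (hadj c hcA w hwA).1 h3.symm (by rw [hgca, hgw])
          · exact iff_of_true h4.symm ((hadj a haA w hwA).1 h1.symm)
      refine sone_mk (insert d (A \ {c})) (fun v => if v = d then g a else g v) ?_ ?_ ?_
      · intro v hv
        rcases Set.mem_insert_iff.mp hv with hvd | hv2
        · rw [hvd, if_pos rfl]; exact hlt a haA
        · rw [if_neg (show ¬ v = d from fun h => hdA (h ▸ hv2.1))]; exact hlt v hv2.1
      · intro u hu w hw
        rcases Set.mem_insert_iff.mp hu with hud | huA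
        · rcases Set.mem_insert_iff.mp hw with hwd | hwA
          · rw [hud, hwd]
            exact iff_of_false (G.irrefl) (by simp)
          · rw [hud, if_pos rfl, if_neg (show ¬ w = d from fun h => hdA (h ▸ hwA.1))]
            exact hside w hwA.1 (fun h => hwA.2 (by simp [h]))
        · rcases Set.mem_insert_iff.mp hw with hwd | hwA
          · rw [hwd, if_pos rfl, if_neg (show ¬ u = d from fun h => hdA (h ▸ huA.1))]
            rw [G.adj_comm, hside u huA.1 (fun h => huA.2 (by simp [h]))]
            exact ne_comm
          · rw [if_neg (show ¬ u = d from fun h => hdA (h ▸ huA.1)), if_neg (show ¬ w = d from fun h => hdA (h ▸ hwA.1))]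
            exact hadj u huA.1 w hwA.1
      · intro u hu w hw huw
        have mainU : ∀ z, z ∉ A → z ≠ d → z ≠ b →
            G.Adj z a ∧ G.Adj z b ∧ G.Adj z c ∧ G.Adj z d := by
          intro z hz hzd hzb
          have hza : z ≠ a := fun h => hz (by rw [h]; exact haA)
          have hzc : z ≠ c := fun h => hz (by rw [h]; exact hcA)
          have hAdj : G.Adj d z :=
            hcl d (hmem d (Ne.symm nbd)) hdA z (hmem z hzb) hz (Ne.symm hzd)
          rcases htri z hza hzb hzc hzd with ⟨_, _, _, h4⟩ | ⟨_, _, _, h4⟩ | h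
          · exact absurd hAdj.symm h4
          · exact absurd hAdj.symm h4
          · exact h
        have hchar : ∀ z, z ∉ (insert d (A \ {c}) : Set V) →
            z = b ∨ z = c ∨ (z ∉ A ∧ z ≠ d ∧ z ≠ b) := by
          intro z hz
          by_cases hzb : z = b
          · exact Or.inl hzb
          by_cases hzc : z = c
          · exact Or.inr (Or.inl hzc)
          have hzd : z ≠ d := fun h => hz (by rw [h]; exact Set.mem_insert _ _)
          have hzA : z ∉ A := fun h =>
            hz (Set.mem_insert_of_mem _ ⟨h, by simp [hzc]⟩)
          exact Or.inr (Or.inr ⟨hzA, hzd, hzb⟩)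
        rcases hchar u hu with rfl | rfl | hu' <;> rcases hchar w hw with rfl | rfl | hw'
        · exact absurd rfl huw
        · exact hbc
        · exact (mainU w hw'.1 hw'.2.1 hw'.2.2).2.1.symm
        · exact hbc.symm
        · exact absurd rfl huw
        · exact (mainU w hw'.1 hw'.2.1 hw'.2.2).2.2.1.symm
        · exact (mainU u hu'.1 hu'.2.1 hu'.2.2).2.1
        · exact (mainU u hu'.1 hu'.2.1 hu'.2.2).2.2.1
        · exact hcl u (hmem u hu'.2.2) hu'.1 w (hmem w hw'.2.2) hw'.1 huw
    · by_cases hdA : d ∈ A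
      · -- case: a, d ∈ A, c ∉ A; reinsert b into the clique
        refine sone_mk A g hlt hadj (cliqueExt ?_)
        intro z hz hzb
        by_cases hzc : z = c
        · subst hzc; exact hbc
        · have hza : z ≠ a := fun h => hz (by rw [h]; exact haA)
          have hzd : z ≠ d := fun h => hz (by rw [h]; exact hdA)
          have hAdj : G.Adj c z :=
            hcl c (hmem c (Ne.symm nbc)) hcA z (hmem z hzb) hz (Ne.symm hzc)
          rcases htri z hza hzb hzc hzd with ⟨_, _, h3, _⟩ | ⟨_, h2, _, _⟩ | ⟨_, h2, _, _⟩
          · exact absurd hAdj.symm h3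
          · exact h2.symm
          · exact h2.symm
      · -- case: a ∈ A, c ∉ A, d ∉ A; move d into the multipartite side, b into the clique
        have hside : ∀ w ∈ A, (G.Adj d w ↔ g a ≠ g w) := by
          intro w hwA
          have hwb : w ≠ b := fun h => hbA (h ▸ hwA)
          have hwc : w ≠ c := fun h => hcA (h ▸ hwA)
          have hwd : w ≠ d := fun h => hdA (h ▸ hwA)
          by_cases hwa : w = a
          · subst hwa; exact iff_of_false (fun h => had h.symm) (by simp)
          · rcases htri w hwa hwb hwc hwd with ⟨h1, _, _, h4⟩ | ⟨h1, _, _, h4⟩ | ⟨h1, _, _, h4⟩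
            · exact iff_of_false (fun h => h4 h.symm)
                (fun h => h (hgEq w hwA (fun hh => h1 hh.symm)).symm)
            · exact iff_of_false (fun h => h4 h.symm)
                (fun h => h (hgEq w hwA (fun hh => h1 hh.symm)).symm)
            · exact iff_of_true h4.symm ((hadj a haA w hwA).1 h1.symm)
        refine sone_mk (insert d A) (fun v => if v = d then g a else g v) ?_ ?_ ?_
        · intro v hv
          rcases Set.mem_insert_iff.mp hv with hvd | hv2
          · rw [hvd, if_pos rfl]; exact hlt a haA
          · rw [if_neg (show ¬ v = d from fun h => hdA (h ▸ hv2))]; exact hlt v hv2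
        · intro u hu w hw
          rcases Set.mem_insert_iff.mp hu with hud | huA
          · rcases Set.mem_insert_iff.mp hw with hwd | hwA
            · rw [hud, hwd]
              exact iff_of_false (G.irrefl) (by simp)
            · rw [hud, if_pos rfl, if_neg (show ¬ w = d from fun h => hdA (h ▸ hwA))]
              exact hside w hwA
          · rcases Set.mem_insert_iff.mp hw with hwd | hwA
            · rw [hwd, if_pos rfl, if_neg (show ¬ u = d from fun h => hdA (h ▸ huA))]
              rw [G.adj_comm, hside u huA]
              exact ne_comm
            · rw [if_neg (show ¬ u = d from fun h => hdA (h ▸ huA)), if_neg (show ¬ w = d from fun h => hdA (h ▸ hwA))]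
              exact hadj u huA w hwA
        · intro u hu w hw huw
          have hu' : u ≠ d ∧ u ∉ A := by
            constructor
            · intro h; exact hu (h ▸ Set.mem_insert _ _)
            · intro h; exact hu (Set.mem_insert_of_mem _ h)
          have hw' : w ≠ d ∧ w ∉ A := by
            constructor
            · intro h; exact hw (h ▸ Set.mem_insert _ _)
            · intro h; exact hw (Set.mem_insert_of_mem _ h)
          have main : ∀ z, z ≠ d → z ∉ A → z ≠ b → G.Adj b z := by
            intro z hzd hz hzb
            by_cases hzc : z = c
            · subst hzc; exact hbc
            · have hza : z ≠ a := fun h => hz (by rw [h]; exact haA)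
              have hAdj : G.Adj c z :=
                hcl c (hmem c (Ne.symm nbc)) hcA z (hmem z hzb) hz (Ne.symm hzc)
              rcases htri z hza hzb hzc hzd with ⟨_, _, h3, _⟩ | ⟨_, h2, _, _⟩ | ⟨_, h2, _, _⟩
              · exact absurd hAdj.symm h3
              · exact h2.symm
              · exact h2.symm
          by_cases hub : u = b
          · subst hub; exact main w hw'.1 hw'.2 (Ne.symm huw)
          · by_cases hwb : w = b
            · subst hwb; exact (main u hu'.1 hu'.2 hub).symm
            · exact hcl u (hmem u hub) hu'.2 w (hmem w hwb) hw'.2 huw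
  · -- case: a ∉ A; reinsert b into the clique
    refine sone_mk A g hlt hadj (cliqueExt ?_)
    intro z hz hzb
    by_cases hza : z = a
    · subst hza; exact hab.symm
    · have hzA : G.Adj a z := hcl a (hmem a nab) haA z (hmem z hzb) hz (Ne.symm hza)
      have hzc : z ≠ c := fun h => hac (h ▸ hzA)
      have hzd : z ≠ d := fun h => had (h ▸ hzA)
      rcases htri z hza hzb hzc hzd with ⟨h1, _, _, _⟩ | ⟨h1, _, _, _⟩ | ⟨_, h2, _, _⟩
      · exact absurd hzA.symm h1
      · exact absurd hzA.symm h1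
      · exact h2.symm
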